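/- Let A be a nonempty list of natural numbers sorted in nondecreasing order whose last entry is T. Then every entry d of diff(A) satisfies d ≤ T, and consequently ⌈log₂(d+1)⌉ ≤ ⌈log₂(T+1)⌉ for every entry d of diff(A). Hence even in the worst case, the bit width required to represent each symbol of the differential time encoding (without overflow symbols) is at most the bit width ⌈log₂(T+1)⌉ required by the absolute time encoding. -/

import Mathlib

/-- Differential encoding with respect to a previous time. -/
def diffAux : ℕ → List ℕ → List ℕ
  | _, [] => []
  | prev, a :: as => (a - prev) :: diffAux a as

/-- Differential encoding: `diff [a₁, …, aₙ] = [a₁ - 0, a₂ - a₁, …, aₙ - aₙ₋₁]`. -/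
def diff (A : List ℕ) : List ℕ := diffAux 0 A

/-- The spike-merge operation on differential-time encoded spike trains. -/
def smerge : List ℕ → List ℕ → List ℕ
  | [], ys => ys
  | xs, [] => xs
  | x :: xs, y :: ys =>
    if x ≤ y then x :: smerge xs ((y - x) :: ys)
    else y :: smerge ((x - y) :: xs) ys
termination_by xs ys => xs.length + ys.length
decreasing_by all_goals simp
lemma mem_le_getLast : ∀ (A : List ℕ) (hA : A ≠ []), A.Pairwise (· ≤ ·) →
    ∀ a ∈ A, a ≤ A.getLast hA
  | [x], _, _, a, ha => by simp at ha; simp [ha]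
  | x :: y :: xs, _, hs, a, ha => by
    rw [List.getLast_cons (by simp)]
    rcases List.mem_cons.1 ha with rfl | h
    · exact le_trans (List.rel_of_pairwise_cons hs (List.getLast_mem _))
        (le_refl _)
    · exact mem_le_getLast (y :: xs) (by simp) hs.of_cons a h

lemma mem_diffAux_le : ∀ (prev : ℕ) (A : List ℕ) (d : ℕ), d ∈ diffAux prev A →
    ∃ a ∈ A, d ≤ a
  | _, [], _, h => by simp [diffAux] at h
  | prev, a :: as, d, h => by
    rw [diffAux] at h
    rcases List.mem_cons.1 h with rfl | h
    · exact ⟨a, List.mem_cons_self, Nat.sub_le _ _⟩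
    · obtain ⟨b, hb, hdb⟩ := mem_diffAux_le a as d h
      exact ⟨b, List.mem_cons_of_mem _ hb, hdb⟩

/-- Every differential time of a nonempty sorted spike train with last spike
at time `T` is at most `T`; hence the per-symbol bit width
`⌈log₂(d+1)⌉ = Nat.clog 2 (d+1)` of the differential encoding is at most
the bit width `⌈log₂(T+1)⌉ = Nat.clog 2 (T+1)` of the absolute encoding. -/
theorem diff_le_last_and_bitwidth
    (A : List ℕ) (hA : A ≠ []) (hAs : A.Pairwise (· ≤ ·))
    (T : ℕ) (hT : A.getLast hA = T) :
    ∀ d ∈ diff A, d ≤ T ∧ Nat.clog 2 (d + 1) ≤ Nat.clog 2 (T + 1) := by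
  intro d hd
  obtain ⟨a, ha, hda⟩ := mem_diffAux_le 0 A d hd
  have haT : a ≤ T := hT ▸ mem_le_getLast A hA hAs a ha
  have : d ≤ T := le_trans hda haT
  exact ⟨this, Nat.clog_mono_right 2 (by omega)⟩
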